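/- If [A,‖·‖_A] is an injective normed operator ideal, then the composition ideal [A∘H_v^∞, ‖·‖_{A∘H_v^∞}] is an injective normed weighted holomorphic ideal. -/

import Mathlib

open scoped ENNReal
open Set

noncomputable section

universe u v w

/-- A bundled complex Banach space. -/
structure BanachSp : Type (u + 1) where
  α : Type u
  [grp : NormedAddCommGroup α]
  [mod : NormedSpace ℂ α]
  [cpl : CompleteSpace α]

attribute [instance] BanachSp.grp BanachSp.mod BanachSp.cpl

instance : CoeSort BanachSp (Type u) := ⟨BanachSp.α⟩

section Defs

variable {E : Type u} {F : Type v} [NormedAddCommGroup E] [NormedSpace ℂ E]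
  [NormedAddCommGroup F] [NormedSpace ℂ F]

/-- `v` is a weight on `U`: continuous and strictly positive there. -/
def IsWeight (U : Set E) (v : E → ℝ) : Prop :=
  ContinuousOn v U ∧ ∀ x ∈ U, 0 < v x

/-- `f` belongs to `H_v^∞(U, F)`: holomorphic on `U` with `sup_{x ∈ U} v x * ‖f x‖ < ∞`. -/
def HvBdd (U : Set E) (v : E → ℝ) (f : E → F) : Prop :=
  DifferentiableOn ℂ f U ∧ BddAbove ((fun x => v x * ‖f x‖) '' U)

/-- The weighted supremum norm `‖f‖_v = sup_{x ∈ U} v x * ‖f x‖`. -/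
def hvNorm (U : Set E) (v : E → ℝ) (f : E → F) : ℝ :=
  sSup ((fun x => v x * ‖f x‖) '' U)

end Defs

section Iota

variable (F : Type u) [NormedAddCommGroup F] [NormedSpace ℂ F]

/-- The closed unit ball of the dual space `F*`. -/
def BallDual : Type u := {φ : StrongDual ℂ F // ‖φ‖ ≤ 1}

instance : Nonempty (BallDual F) := ⟨⟨0, by simp⟩⟩

/-- `ℓ∞(B_{F*})`, the space of bounded scalar functions on the closed unit ball of `F*`. -/
abbrev Linf : Type u := lp (fun _ : BallDual F => ℂ) ∞

/-- The canonical embedding `ι_F : F → ℓ∞(B_{F*})`, `⟨ι_F y, φ⟩ = φ y`. -/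
def iotaFun (y : F) : Linf F :=
  ⟨fun φ => φ.1 y, memℓp_infty ⟨‖y‖, by
    rintro r ⟨φ, rfl⟩
    calc ‖φ.1 y‖ ≤ ‖φ.1‖ * ‖y‖ := φ.1.le_opNorm y
      _ ≤ 1 * ‖y‖ := by
          have := φ.2
          exact mul_le_mul_of_nonneg_right this (norm_nonneg y)
      _ = ‖y‖ := one_mul _⟩⟩

/-- The canonical embedding `ι_F : F → ℓ∞(B_{F*})` as a continuous linear map. -/
def iota : F →L[ℂ] Linf F :=
  LinearMap.mkContinuous
    { toFun := iotaFun F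
      map_add' := by
        intro y z
        apply lp.ext
        rw [lp.coeFn_add]
        funext φ
        show φ.1 (y + z) = φ.1 y + φ.1 z
        exact map_add φ.1 y z
      map_smul' := by
        intro c y
        apply lp.ext
        rw [lp.coeFn_smul]
        funext φ
        show φ.1 (c • y) = c • φ.1 y
        exact map_smul φ.1 c y }
    1 (by
      intro y
      rw [one_mul]
      refine lp.norm_le_of_forall_le (norm_nonneg y) fun φ => ?_
      calc ‖φ.1 y‖ ≤ ‖φ.1‖ * ‖y‖ := φ.1.le_opNorm y
        _ ≤ 1 * ‖y‖ := mul_le_mul_of_nonneg_right φ.2 (norm_nonneg y)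
        _ = ‖y‖ := one_mul _)

/-- `ℓ∞(B_{F*})` as a bundled Banach space. -/
def LinfSp : BanachSp.{u} := ⟨Linf F⟩

end Iota

/-- An assignment of a class of weighted holomorphic mappings, together with a
"norm" function, to every component `(U, v, F)`. -/
structure WHAssignment : Type (u + 1) where
  mem : ∀ (E : BanachSp.{u}) (U : Set E) (v : E → ℝ) (F : BanachSp.{u}), (E → F) → Prop
  nrm : ∀ (E : BanachSp.{u}) (U : Set E) (v : E → ℝ) (F : BanachSp.{u}), (E → F) → ℝ

/-- `[I, ‖·‖_I]` is a normed weighted holomorphic ideal. -/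
structure IsNormedWHIdeal (I : WHAssignment.{u}) : Prop where
  mem_hv : ∀ (E : BanachSp.{u}) (U : Set E.α) (v : E.α → ℝ), IsOpen U → IsWeight U v →
    ∀ (F : BanachSp.{u}) (f : E.α → F.α), I.mem E U v F f → HvBdd U v f
  zero_mem : ∀ (E : BanachSp.{u}) (U : Set E.α) (v : E.α → ℝ), IsOpen U → IsWeight U v →
    ∀ (F : BanachSp.{u}), I.mem E U v F (fun _ => 0)
  add_mem : ∀ (E : BanachSp.{u}) (U : Set E.α) (v : E.α → ℝ), IsOpen U → IsWeight U v →
    ∀ (F : BanachSp.{u}) (f g : E.α → F.α), I.mem E U v F f → I.mem E U v F g →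
      I.mem E U v F (fun x => f x + g x)
  smul_mem : ∀ (E : BanachSp.{u}) (U : Set E.α) (v : E.α → ℝ), IsOpen U → IsWeight U v →
    ∀ (F : BanachSp.{u}) (c : ℂ) (f : E.α → F.α), I.mem E U v F f →
      I.mem E U v F (fun x => c • f x)
  nrm_nonneg : ∀ (E : BanachSp.{u}) (U : Set E.α) (v : E.α → ℝ), IsOpen U → IsWeight U v →
    ∀ (F : BanachSp.{u}) (f : E.α → F.α), I.mem E U v F f → 0 ≤ I.nrm E U v F f
  nrm_eq_zero : ∀ (E : BanachSp.{u}) (U : Set E.α) (v : E.α → ℝ), IsOpen U → IsWeight U v →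
    ∀ (F : BanachSp.{u}) (f : E.α → F.α), I.mem E U v F f → I.nrm E U v F f = 0 →
      ∀ x ∈ U, f x = 0
  nrm_add_le : ∀ (E : BanachSp.{u}) (U : Set E.α) (v : E.α → ℝ), IsOpen U → IsWeight U v →
    ∀ (F : BanachSp.{u}) (f g : E.α → F.α), I.mem E U v F f → I.mem E U v F g →
      I.nrm E U v F (fun x => f x + g x) ≤ I.nrm E U v F f + I.nrm E U v F g
  nrm_smul : ∀ (E : BanachSp.{u}) (U : Set E.α) (v : E.α → ℝ), IsOpen U → IsWeight U v →
    ∀ (F : BanachSp.{u}) (c : ℂ) (f : E.α → F.α), I.mem E U v F f →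
      I.nrm E U v F (fun x => c • f x) = ‖c‖ * I.nrm E U v F f
  hv_le_nrm : ∀ (E : BanachSp.{u}) (U : Set E.α) (v : E.α → ℝ), IsOpen U → IsWeight U v →
    ∀ (F : BanachSp.{u}) (f : E.α → F.α), I.mem E U v F f →
      hvNorm U v f ≤ I.nrm E U v F f
  unit_mem : ∀ (E : BanachSp.{u}) (U : Set E.α) (v : E.α → ℝ), IsOpen U → IsWeight U v →
    ∀ (F : BanachSp.{u}) (h : E.α → ℂ), HvBdd U v h → ∀ y : F.α,
      I.mem E U v F (fun x => h x • y) ∧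
        I.nrm E U v F (fun x => h x • y) = hvNorm U v h * ‖y‖
  comp_mem : ∀ (E : BanachSp.{u}) (U : Set E.α) (v : E.α → ℝ), IsOpen U → IsWeight U v →
    ∀ (V : Set E.α), IsOpen V → V ⊆ U →
    ∀ h : E.α → E.α, DifferentiableOn ℂ h V → Set.MapsTo h V U →
    ∀ c : ℝ, 0 ≤ c → (∀ x ∈ V, v x ≤ c * v (h x)) →
    ∀ (F G : BanachSp.{u}) (T : F.α →L[ℂ] G.α) (f : E.α → F.α), I.mem E U v F f →
      I.mem E V v G (fun x => T (f (h x))) ∧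
        I.nrm E V v G (fun x => T (f (h x))) ≤ ‖T‖ * I.nrm E U v F f * c

/-- `[I, ‖·‖_I]` is a Banach weighted holomorphic ideal: a normed one with complete components. -/
structure IsBanachWHIdeal (I : WHAssignment.{u}) extends IsNormedWHIdeal I : Prop where
  complete : ∀ (E : BanachSp.{u}) (U : Set E.α) (v : E.α → ℝ), IsOpen U → IsWeight U v →
    ∀ (F : BanachSp.{u}) (f : ℕ → E.α → F.α), (∀ n, I.mem E U v F (f n)) →
      (∀ ε : ℝ, 0 < ε → ∃ N : ℕ, ∀ m ≥ N, ∀ n ≥ N,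
        I.nrm E U v F (fun x => f m x - f n x) < ε) →
      ∃ g : E.α → F.α, I.mem E U v F g ∧
        ∀ ε : ℝ, 0 < ε → ∃ N : ℕ, ∀ n ≥ N, I.nrm E U v F (fun x => f n x - g x) < ε

/-- Injectivity of a normed weighted holomorphic ideal. -/
def WHInjective (I : WHAssignment.{u}) : Prop :=
  ∀ (E : BanachSp.{u}) (U : Set E.α) (v : E.α → ℝ), IsOpen U → IsWeight U v →
  ∀ (F G : BanachSp.{u}) (f : E.α → F.α), HvBdd U v f →
  ∀ ι : F.α →ₗᵢ[ℂ] G.α, I.mem E U v G (fun x => ι (f x)) →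
    I.mem E U v F f ∧ I.nrm E U v F f = I.nrm E U v G (fun x => ι (f x))

/-- The injective hull `[I^inj, ‖·‖_{I^inj}]` of a weighted holomorphic ideal. -/
def whInj (I : WHAssignment.{u}) : WHAssignment.{u} where
  mem E U v F f := HvBdd U v f ∧ I.mem E U v (LinfSp F.α) (fun x => iota F.α (f x))
  nrm E U v F f := I.nrm E U v (LinfSp F.α) (fun x => iota F.α (f x))

/-- The order relation `[I, ‖·‖_I] ≤ [J, ‖·‖_J]` between weighted holomorphic ideals. -/
def WHle (I J : WHAssignment.{u}) : Prop :=
  ∀ (E : BanachSp.{u}) (U : Set E.α) (v : E.α → ℝ), IsOpen U → IsWeight U v →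
  ∀ (F : BanachSp.{u}) (f : E.α → F.α), I.mem E U v F f →
    J.mem E U v F f ∧ J.nrm E U v F f ≤ I.nrm E U v F f

/-- The domination property: `‖Σ λᵢ v(xᵢ) f(xᵢ)‖ ≤ ‖Σ λᵢ v(xᵢ) g(xᵢ)‖` for all finite families. -/
def Dominates {E : Type u} {F : Type v} {G : Type w} [NormedAddCommGroup E] [NormedSpace ℂ E]
    [NormedAddCommGroup F] [NormedSpace ℂ F] [NormedAddCommGroup G] [NormedSpace ℂ G]
    (U : Set E) (v : E → ℝ) (f : E → F) (g : E → G) : Prop :=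
  ∀ (n : ℕ) (lam : Fin n → ℂ) (x : Fin n → E), (∀ i, x i ∈ U) →
    ‖∑ i, lam i • v (x i) • f (x i)‖ ≤ ‖∑ i, lam i • v (x i) • g (x i)‖


/-- An assignment of a class of operators and a "norm" to every pair of Banach spaces. -/
structure OpAssignment : Type (u + 1) where
  mem : ∀ (E F : BanachSp.{u}), (E.α →L[ℂ] F.α) → Prop
  nrm : ∀ (E F : BanachSp.{u}), (E.α →L[ℂ] F.α) → ℝ

/-- `A` is an operator ideal (no norm conditions). -/
structure IsOpIdeal (A : OpAssignment.{u}) : Prop where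
  zero_mem : ∀ (E F : BanachSp.{u}), A.mem E F 0
  add_mem : ∀ (E F : BanachSp.{u}) (S T : E.α →L[ℂ] F.α),
    A.mem E F S → A.mem E F T → A.mem E F (S + T)
  rank_one_mem : ∀ (E F : BanachSp.{u}) (φ : E.α →L[ℂ] ℂ) (y : F.α),
    A.mem E F (φ.smulRight y)
  comp_mem : ∀ (E₀ E F F₀ : BanachSp.{u}) (R : E₀.α →L[ℂ] E.α) (T : E.α →L[ℂ] F.α)
    (S : F.α →L[ℂ] F₀.α), A.mem E F T → A.mem E₀ F₀ ((S.comp T).comp R)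

/-- `[A, ‖·‖_A]` is a normed operator ideal in the sense of Pietsch. -/
structure IsNormedOpIdeal (A : OpAssignment.{u}) : Prop where
  zero_mem : ∀ (E F : BanachSp.{u}), A.mem E F 0
  add_mem : ∀ (E F : BanachSp.{u}) (S T : E.α →L[ℂ] F.α),
    A.mem E F S → A.mem E F T → A.mem E F (S + T)
  smul_mem : ∀ (E F : BanachSp.{u}) (c : ℂ) (T : E.α →L[ℂ] F.α),
    A.mem E F T → A.mem E F (c • T)
  nrm_nonneg : ∀ (E F : BanachSp.{u}) (T : E.α →L[ℂ] F.α), A.mem E F T → 0 ≤ A.nrm E F T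
  nrm_add_le : ∀ (E F : BanachSp.{u}) (S T : E.α →L[ℂ] F.α), A.mem E F S → A.mem E F T →
    A.nrm E F (S + T) ≤ A.nrm E F S + A.nrm E F T
  nrm_smul : ∀ (E F : BanachSp.{u}) (c : ℂ) (T : E.α →L[ℂ] F.α), A.mem E F T →
    A.nrm E F (c • T) = ‖c‖ * A.nrm E F T
  op_le_nrm : ∀ (E F : BanachSp.{u}) (T : E.α →L[ℂ] F.α), A.mem E F T → ‖T‖ ≤ A.nrm E F T
  rank_one_mem : ∀ (E F : BanachSp.{u}) (φ : E.α →L[ℂ] ℂ) (y : F.α),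
    A.mem E F (φ.smulRight y) ∧ A.nrm E F (φ.smulRight y) = ‖φ‖ * ‖y‖
  comp_mem : ∀ (E₀ E F F₀ : BanachSp.{u}) (R : E₀.α →L[ℂ] E.α) (T : E.α →L[ℂ] F.α)
    (S : F.α →L[ℂ] F₀.α), A.mem E F T → A.mem E₀ F₀ ((S.comp T).comp R) ∧
      A.nrm E₀ F₀ ((S.comp T).comp R) ≤ ‖S‖ * A.nrm E F T * ‖R‖

/-- `[A, ‖·‖_A]` is a Banach operator ideal. -/
structure IsBanachOpIdeal (A : OpAssignment.{u}) extends IsNormedOpIdeal A : Prop where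
  complete : ∀ (E F : BanachSp.{u}) (T : ℕ → (E.α →L[ℂ] F.α)), (∀ n, A.mem E F (T n)) →
    (∀ ε : ℝ, 0 < ε → ∃ N : ℕ, ∀ m ≥ N, ∀ n ≥ N, A.nrm E F (T m - T n) < ε) →
    ∃ S, A.mem E F S ∧ ∀ ε : ℝ, 0 < ε → ∃ N : ℕ, ∀ n ≥ N, A.nrm E F (T n - S) < ε

/-- Injectivity of a normed operator ideal. -/
def OpInjective (A : OpAssignment.{u}) : Prop :=
  ∀ (E F G : BanachSp.{u}) (ι : F.α →ₗᵢ[ℂ] G.α) (T : E.α →L[ℂ] F.α),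
    A.mem E G (ι.toContinuousLinearMap.comp T) →
      A.mem E F T ∧ A.nrm E F T = A.nrm E G (ι.toContinuousLinearMap.comp T)

/-- The injective hull `[A^inj, ‖·‖_{A^inj}]` of an operator ideal. -/
def opInj (A : OpAssignment.{u}) : OpAssignment.{u} where
  mem E F T := A.mem E (LinfSp F.α) ((iota F.α).comp T)
  nrm E F T := A.nrm E (LinfSp F.α) ((iota F.α).comp T)

/-- The closure `\bar{A}` of an operator ideal, under the operator norm. -/
def opClosure (A : OpAssignment.{u}) : OpAssignment.{u} where
  mem E F T := ∀ ε : ℝ, 0 < ε → ∃ S, A.mem E F S ∧ ‖T - S‖ ≤ ε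
  nrm E F T := ‖T‖

/-- The composition ideal `[A ∘ H_v^∞, ‖·‖_{A ∘ H_v^∞}]`. -/
def compWH (A : OpAssignment.{u}) : WHAssignment.{u} where
  mem E U v F f := ∃ (G : BanachSp.{u}) (T : G.α →L[ℂ] F.α) (g : E.α → G.α),
    A.mem G F T ∧ HvBdd U v g ∧ ∀ x ∈ U, f x = T (g x)
  nrm E U v F f := sInf {r | ∃ (G : BanachSp.{u}) (T : G.α →L[ℂ] F.α) (g : E.α → G.α),
    A.mem G F T ∧ HvBdd U v g ∧ (∀ x ∈ U, f x = T (g x)) ∧ r = A.nrm G F T * hvNorm U v g}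

/-- The closure of a weighted holomorphic ideal in `(H_v^∞, ‖·‖_v)`. -/
def whClosure (I : WHAssignment.{u}) : WHAssignment.{u} where
  mem E U v F f := HvBdd U v f ∧ ∀ ε : ℝ, 0 < ε → ∃ g : E.α → F.α,
    I.mem E U v F g ∧ ∀ x ∈ U, v x * ‖f x - g x‖ ≤ ε
  nrm E U v F f := hvNorm U v f


section Aux
variable {E : Type u} {F : Type v} {G : Type w} [NormedAddCommGroup E] [NormedSpace ℂ E]
  [NormedAddCommGroup F] [NormedSpace ℂ F] [NormedAddCommGroup G] [NormedSpace ℂ G]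
  {U : Set E} {v : E → ℝ}

lemma hvNorm_nonneg (hw : IsWeight U v) (f : E → F) : 0 ≤ hvNorm U v f :=
  Real.sSup_nonneg fun r ⟨x, hx, hr⟩ => hr ▸ mul_nonneg (hw.2 x hx).le (norm_nonneg _)

lemma le_hvNorm {f : E → F} (hb : BddAbove ((fun x => v x * ‖f x‖) '' U)) {x : E}
    (hx : x ∈ U) : v x * ‖f x‖ ≤ hvNorm U v f :=
  le_csSup hb ⟨x, hx, rfl⟩

lemma hvNorm_le {f : E → F} {c : ℝ} (hc : 0 ≤ c) (h : ∀ x ∈ U, v x * ‖f x‖ ≤ c) :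
    hvNorm U v f ≤ c :=
  Real.sSup_le (fun r ⟨x, hx, hr⟩ => hr ▸ h x hx) hc

lemma hvNorm_eq_of_norm_eq {f : E → F} {g : E → G} (h : ∀ x ∈ U, ‖f x‖ = ‖g x‖) :
    hvNorm U v f = hvNorm U v g := by
  unfold hvNorm
  congr 1
  exact Set.image_congr fun x hx => by rw [h x hx]

lemma hvBddAbove_congr_norm {f : E → F} {g : E → G} (h : ∀ x ∈ U, ‖f x‖ = ‖g x‖)
    (hb : BddAbove ((fun x => v x * ‖g x‖) '' U)) :
    BddAbove ((fun x => v x * ‖f x‖) '' U) := by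
  have : (fun x => v x * ‖f x‖) '' U = (fun x => v x * ‖g x‖) '' U :=
    Set.image_congr fun x hx => by rw [h x hx]
  rw [this]; exact hb

lemma hvNorm_const_smul_le (hw : IsWeight U v) {g : E → G}
    (hb : BddAbove ((fun x => v x * ‖g x‖) '' U)) (c : ℂ) :
    hvNorm U v (fun x => c • g x) ≤ ‖c‖ * hvNorm U v g := by
  refine hvNorm_le (mul_nonneg (norm_nonneg c) (hvNorm_nonneg hw g)) fun x hx => ?_
  calc v x * ‖c • g x‖ = ‖c‖ * (v x * ‖g x‖) := by rw [norm_smul]; ring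
    _ ≤ ‖c‖ * hvNorm U v g :=
      mul_le_mul_of_nonneg_left (le_hvNorm hb hx) (norm_nonneg c)

lemma hvBdd_const_smul {g : E → G} (hg : HvBdd U v g) (c : ℂ) :
    HvBdd U v (fun x => c • g x) := by
  refine ⟨hg.1.const_smul c, ?_⟩
  obtain ⟨M, hM⟩ := hg.2
  refine ⟨‖c‖ * M, ?_⟩
  rintro r ⟨x, hx, rfl⟩
  have h1 : v x * ‖g x‖ ≤ M := hM ⟨x, hx, rfl⟩
  calc v x * ‖c • g x‖ = ‖c‖ * (v x * ‖g x‖) := by rw [norm_smul]; ring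
    _ ≤ ‖c‖ * M := mul_le_mul_of_nonneg_left h1 (norm_nonneg c)

lemma hvNorm_const_smul (hw : IsWeight U v) {g : E → G} (hg : HvBdd U v g) (c : ℂ) :
    hvNorm U v (fun x => c • g x) = ‖c‖ * hvNorm U v g := by
  rcases eq_or_ne c 0 with rfl | hc
  · simp only [norm_zero, zero_mul]
    have h0 : ∀ x ∈ U, v x * ‖(0:ℂ) • g x‖ ≤ 0 := fun x hx => by simp
    exact le_antisymm (hvNorm_le le_rfl h0) (hvNorm_nonneg hw _)
  · refine le_antisymm (hvNorm_const_smul_le hw hg.2 c) ?_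
    have h2 := hvNorm_const_smul_le hw (hvBdd_const_smul hg c).2 c⁻¹
    have h3 : (fun x => c⁻¹ • c • g x) = g := by
      funext x; rw [smul_smul, inv_mul_cancel₀ hc, one_smul]
    rw [h3] at h2
    have hc' : (0:ℝ) < ‖c‖ := norm_pos_iff.mpr hc
    calc ‖c‖ * hvNorm U v g ≤ ‖c‖ * (‖c⁻¹‖ * hvNorm U v (fun x => c • g x)) :=
          mul_le_mul_of_nonneg_left h2 (norm_nonneg c)
      _ = hvNorm U v (fun x => c • g x) := by
          rw [norm_inv, ← mul_assoc, mul_inv_cancel₀ (ne_of_gt hc'), one_mul]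

lemma hvNorm_smul_const (hw : IsWeight U v) {h : E → ℂ} (hh : HvBdd U v h) (y : F) :
    hvNorm U v (fun x => h x • y) = hvNorm U v h * ‖y‖ := by
  rcases eq_or_lt_of_le (norm_nonneg y) with hy | hy
  · have h0 : ∀ x ∈ U, v x * ‖h x • y‖ ≤ 0 := fun x hx => by
      rw [norm_smul, ← hy]; simp
    rw [← hy, mul_zero]
    exact le_antisymm (hvNorm_le le_rfl h0) (hvNorm_nonneg hw _)
  · refine le_antisymm ?_ ?_
    · refine hvNorm_le (mul_nonneg (hvNorm_nonneg hw h) (norm_nonneg y)) fun x hx => ?_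
      calc v x * ‖h x • y‖ = (v x * ‖h x‖) * ‖y‖ := by rw [norm_smul]; ring
        _ ≤ hvNorm U v h * ‖y‖ :=
          mul_le_mul_of_nonneg_right (le_hvNorm hh.2 hx) (norm_nonneg y)
    · have hbs : BddAbove ((fun x => v x * ‖h x • y‖) '' U) := by
        obtain ⟨M, hM⟩ := hh.2
        refine ⟨M * ‖y‖, ?_⟩
        rintro r ⟨x, hx, rfl⟩
        calc v x * ‖h x • y‖ = (v x * ‖h x‖) * ‖y‖ := by rw [norm_smul]; ring
          _ ≤ M * ‖y‖ := mul_le_mul_of_nonneg_right (hM ⟨x, hx, rfl⟩) (norm_nonneg y)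
      rw [← le_div_iff₀ hy]
      refine hvNorm_le (div_nonneg (hvNorm_nonneg hw _) hy.le) fun x hx => ?_
      rw [le_div_iff₀ hy]
      calc v x * ‖h x‖ * ‖y‖ = v x * ‖h x • y‖ := by rw [norm_smul]; ring
        _ ≤ hvNorm U v (fun x => h x • y) := le_hvNorm hbs hx

lemma le_mul_csInf {S : Set ℝ} (hS : S.Nonempty) {k b : ℝ} (hk : 0 ≤ k)
    (h : ∀ r ∈ S, b ≤ k * r) : b ≤ k * sInf S := by
  rcases eq_or_lt_of_le hk with hk0 | hk0
  · obtain ⟨r, hr⟩ := hS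
    have := h r hr
    rw [← hk0] at this ⊢
    simpa using this
  · have : b / k ≤ sInf S := le_csInf hS fun r hr => (div_le_iff₀ hk0).mpr (by
      rw [mul_comm]; exact h r hr)
    calc b = k * (b / k) := by field_simp
      _ ≤ k * sInf S := mul_le_mul_of_nonneg_left this hk

end Aux


section CompAux

def factSet (A : OpAssignment.{u}) (E : BanachSp.{u}) (U : Set E.α) (v : E.α → ℝ)
    (F : BanachSp.{u}) (f : E.α → F.α) : Set ℝ :=
  {r | ∃ (G : BanachSp.{u}) (T : G.α →L[ℂ] F.α) (g : E.α → G.α),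
    A.mem G F T ∧ HvBdd U v g ∧ (∀ x ∈ U, f x = T (g x)) ∧ r = A.nrm G F T * hvNorm U v g}

variable {A : OpAssignment.{u}} {E F : BanachSp.{u}} {U : Set E.α} {v : E.α → ℝ}
  {f : E.α → F.α}

lemma compWH_nrm_eq (A : OpAssignment.{u}) (E : BanachSp.{u}) (U : Set E.α) (v : E.α → ℝ)
    (F : BanachSp.{u}) (f : E.α → F.α) :
    (compWH A).nrm E U v F f = sInf (factSet A E U v F f) := rfl

lemma factSet_nonneg (hA : IsNormedOpIdeal A) (hw : IsWeight U v) :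
    ∀ r ∈ factSet A E U v F f, 0 ≤ r := by
  rintro r ⟨G, T, g, hT, hg, hfg, rfl⟩
  exact mul_nonneg (hA.nrm_nonneg G F T hT) (hvNorm_nonneg hw g)

lemma factSet_bddBelow (hA : IsNormedOpIdeal A) (hw : IsWeight U v) :
    BddBelow (factSet A E U v F f) :=
  ⟨0, fun _ hr => factSet_nonneg hA hw _ hr⟩

lemma factSet_nonempty (hf : (compWH A).mem E U v F f) :
    (factSet A E U v F f).Nonempty := by
  obtain ⟨G, T, g, hT, hg, hfg⟩ := hf
  exact ⟨_, G, T, g, hT, hg, hfg, rfl⟩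

lemma compNrm_le (hA : IsNormedOpIdeal A) (hw : IsWeight U v) {r : ℝ}
    (h : r ∈ factSet A E U v F f) : (compWH A).nrm E U v F f ≤ r :=
  csInf_le (factSet_bddBelow hA hw) h

lemma compNrm_nonneg (hA : IsNormedOpIdeal A) (hw : IsWeight U v) :
    0 ≤ (compWH A).nrm E U v F f :=
  Real.sInf_nonneg (factSet_nonneg hA hw)

lemma compWH_mem_hv (hA : IsNormedOpIdeal A) (hU : IsOpen U) (hw : IsWeight U v)
    (hf : (compWH A).mem E U v F f) : HvBdd U v f := by
  obtain ⟨G, T, g, hT, hg, hfg⟩ := hf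
  constructor
  · exact (T.differentiable.comp_differentiableOn hg.1).congr hfg
  · obtain ⟨M, hM⟩ := hg.2
    refine ⟨‖T‖ * M, ?_⟩
    rintro r ⟨x, hx, rfl⟩
    have h1 : v x * ‖g x‖ ≤ M := hM ⟨x, hx, rfl⟩
    calc v x * ‖f x‖ = v x * ‖T (g x)‖ := by rw [hfg x hx]
      _ ≤ v x * (‖T‖ * ‖g x‖) :=
        mul_le_mul_of_nonneg_left (T.le_opNorm _) (hw.2 x hx).le
      _ = ‖T‖ * (v x * ‖g x‖) := by ring
      _ ≤ ‖T‖ * M := mul_le_mul_of_nonneg_left h1 (norm_nonneg T)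

lemma compWH_hv_le_nrm (hA : IsNormedOpIdeal A) (hU : IsOpen U) (hw : IsWeight U v)
    (hf : (compWH A).mem E U v F f) : hvNorm U v f ≤ (compWH A).nrm E U v F f := by
  rw [compWH_nrm_eq]
  refine le_csInf (factSet_nonempty hf) ?_
  rintro r ⟨G, T, g, hT, hg, hfg, rfl⟩
  refine hvNorm_le (mul_nonneg (hA.nrm_nonneg G F T hT) (hvNorm_nonneg hw g)) fun x hx => ?_
  calc v x * ‖f x‖ = v x * ‖T (g x)‖ := by rw [hfg x hx]
    _ ≤ v x * (‖T‖ * ‖g x‖) :=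
      mul_le_mul_of_nonneg_left (T.le_opNorm _) (hw.2 x hx).le
    _ = ‖T‖ * (v x * ‖g x‖) := by ring
    _ ≤ ‖T‖ * hvNorm U v g :=
      mul_le_mul_of_nonneg_left (le_hvNorm hg.2 hx) (norm_nonneg T)
    _ ≤ A.nrm G F T * hvNorm U v g :=
      mul_le_mul_of_nonneg_right (hA.op_le_nrm G F T hT) (hvNorm_nonneg hw g)

lemma hvBdd_zero : HvBdd U v (fun _ => (0 : F.α)) := by
  refine ⟨differentiableOn_const 0, ⟨0, ?_⟩⟩
  rintro r ⟨x, hx, rfl⟩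
  simp

lemma hvNorm_zero_le_one : hvNorm U v (fun _ => (0 : F.α)) ≤ 1 :=
  hvNorm_le zero_le_one fun x _ => by simp

lemma opNrm_zero (hA : IsNormedOpIdeal A) (G : BanachSp.{u}) :
    A.nrm G F 0 = 0 := by
  have h := hA.nrm_smul G F 0 0 (hA.zero_mem G F)
  simpa using h

/-- Normalization of factorizations. -/
lemma normalizeFact (hA : IsNormedOpIdeal A) (hU : IsOpen U) (hw : IsWeight U v)
    (hf : (compWH A).mem E U v F f) {t : ℝ} (ht : (compWH A).nrm E U v F f < t) :
    ∃ (G : BanachSp.{u}) (T : G.α →L[ℂ] F.α) (g : E.α → G.α),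
      A.mem G F T ∧ HvBdd U v g ∧ (∀ x ∈ U, f x = T (g x)) ∧
        A.nrm G F T ≤ t ∧ hvNorm U v g ≤ 1 := by
  rw [compWH_nrm_eq] at ht
  obtain ⟨r, hrS, hrt⟩ := exists_lt_of_csInf_lt (factSet_nonempty hf) ht
  obtain ⟨G, T, g, hT, hg, hfg, rfl⟩ := hrS
  rcases eq_or_lt_of_le (hvNorm_nonneg hw g) with hc | hc
  · -- hvNorm g = 0 : f vanishes on U
    have hgz : ∀ x ∈ U, g x = 0 := by
      intro x hx
      have h1 : v x * ‖g x‖ ≤ 0 := hc ▸ le_hvNorm hg.2 hx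
      have h2 : ‖g x‖ ≤ 0 := by
        by_contra h
        push_neg at h
        exact absurd h1 (not_le.mpr (mul_pos (hw.2 x hx) h))
      simpa using le_antisymm h2 (norm_nonneg _)
    refine ⟨G, 0, fun _ => 0, hA.zero_mem G F, hvBdd_zero, ?_, ?_, hvNorm_zero_le_one⟩
    · intro x hx
      rw [hfg x hx, hgz x hx]
      simp
    · rw [opNrm_zero hA]
      have : (0:ℝ) ≤ A.nrm G F T * hvNorm U v g :=
        mul_nonneg (hA.nrm_nonneg G F T hT) (hvNorm_nonneg hw g)
      linarith
  · -- hvNorm g > 0 : rescale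
    set c : ℝ := hvNorm U v g with hcdef
    have hcne : (c : ℂ) ≠ 0 := by
      simpa using ne_of_gt hc
    refine ⟨G, (c : ℂ) • T, fun x => ((c : ℝ)⁻¹ : ℂ) • g x,
      hA.smul_mem G F _ T hT, hvBdd_const_smul hg _, ?_, ?_, ?_⟩
    · intro x hx
      rw [hfg x hx]
      show T (g x) = ((c:ℂ) • T) (((c:ℝ)⁻¹ : ℂ) • g x)
      rw [ContinuousLinearMap.smul_apply, map_smul, smul_smul,
        mul_inv_cancel₀ hcne, one_smul]
    · rw [hA.nrm_smul G F _ T hT]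
      have hnc : ‖(c:ℂ)‖ = c := by
        rw [Complex.norm_real, Real.norm_eq_abs, abs_of_pos hc]
      rw [hnc]
      calc c * A.nrm G F T = A.nrm G F T * hvNorm U v g := by rw [mul_comm, hcdef]
        _ ≤ t := hrt.le
    · rw [hvNorm_const_smul hw hg _]
      have : ‖(((c:ℝ)⁻¹ : ℂ))‖ = c⁻¹ := by
        rw [← Complex.ofReal_inv, Complex.norm_real, Real.norm_eq_abs,
          abs_of_pos (inv_pos.mpr hc)]
      rw [this, inv_mul_cancel₀ (ne_of_gt hc)]

end CompAux

section CompAux2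

variable {A : OpAssignment.{u}}

lemma nrm_comp_le_left (hA : IsNormedOpIdeal A) {Gp G F : BanachSp.{u}}
    (R : Gp.α →L[ℂ] G.α) (T : G.α →L[ℂ] F.α) (hT : A.mem G F T) (hR : ‖R‖ ≤ 1) :
    A.mem Gp F (T.comp R) ∧ A.nrm Gp F (T.comp R) ≤ A.nrm G F T := by
  have h := hA.comp_mem Gp G F F R T (ContinuousLinearMap.id ℂ F.α) hT
  rw [ContinuousLinearMap.id_comp] at h
  refine ⟨h.1, h.2.trans ?_⟩
  have h1 : ‖ContinuousLinearMap.id ℂ F.α‖ ≤ 1 := ContinuousLinearMap.norm_id_le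
  have h2 : 0 ≤ A.nrm G F T := hA.nrm_nonneg G F T hT
  calc ‖ContinuousLinearMap.id ℂ F.α‖ * A.nrm G F T * ‖R‖ ≤ (1 * A.nrm G F T) * 1 :=
        mul_le_mul (mul_le_mul h1 le_rfl h2 zero_le_one) hR (norm_nonneg R)
          (by simpa using h2)
    _ = A.nrm G F T := by ring

lemma nrm_comp_le_right (hA : IsNormedOpIdeal A) {G F F₀ : BanachSp.{u}}
    (T : G.α →L[ℂ] F.α) (S : F.α →L[ℂ] F₀.α) (hT : A.mem G F T) :
    A.mem G F₀ (S.comp T) ∧ A.nrm G F₀ (S.comp T) ≤ ‖S‖ * A.nrm G F T := by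
  have h := hA.comp_mem G G F F₀ (ContinuousLinearMap.id ℂ G.α) T S hT
  rw [ContinuousLinearMap.comp_id] at h
  refine ⟨h.1, h.2.trans ?_⟩
  have h1 : ‖ContinuousLinearMap.id ℂ G.α‖ ≤ 1 := ContinuousLinearMap.norm_id_le
  have h2 : 0 ≤ A.nrm G F T := hA.nrm_nonneg G F T hT
  calc ‖S‖ * A.nrm G F T * ‖ContinuousLinearMap.id ℂ G.α‖ ≤ (‖S‖ * A.nrm G F T) * 1 :=
        mul_le_mul_of_nonneg_left h1 (mul_nonneg (norm_nonneg S) h2)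
    _ = ‖S‖ * A.nrm G F T := mul_one _

variable {E F : BanachSp.{u}} {U : Set E.α} {v : E.α → ℝ}

lemma compWH_zero_mem (hA : IsNormedOpIdeal A) :
    (compWH A).mem E U v F (fun _ => 0) :=
  ⟨F, 0, fun _ => 0, hA.zero_mem F F, hvBdd_zero, fun x _ => by simp⟩

lemma compWH_smul_factor (hA : IsNormedOpIdeal A) {f : E.α → F.α} (c : ℂ)
    (hf : (compWH A).mem E U v F f) : (compWH A).mem E U v F (fun x => c • f x) := by
  obtain ⟨G, T, g, hT, hg, hfg⟩ := hf
  exact ⟨G, c • T, g, hA.smul_mem G F c T hT, hg, fun x hx => by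
    simp [ContinuousLinearMap.smul_apply, hfg x hx]⟩

lemma compWH_add_mem (hA : IsNormedOpIdeal A) (hU : IsOpen U) (hw : IsWeight U v)
    {f g : E.α → F.α} (hf : (compWH A).mem E U v F f) (hg : (compWH A).mem E U v F g) :
    (compWH A).mem E U v F (fun x => f x + g x) := by
  obtain ⟨G₁, T₁, g₁, hT₁, hg₁, hfg₁⟩ := hf
  obtain ⟨G₂, T₂, g₂, hT₂, hg₂, hfg₂⟩ := hg
  refine ⟨⟨G₁.α × G₂.α⟩,
    T₁.comp (ContinuousLinearMap.fst ℂ G₁.α G₂.α) +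
      T₂.comp (ContinuousLinearMap.snd ℂ G₁.α G₂.α),
    fun x => (g₁ x, g₂ x), ?_, ?_, ?_⟩
  · have hfst : ‖ContinuousLinearMap.fst ℂ G₁.α G₂.α‖ ≤ 1 :=
      (ContinuousLinearMap.fst ℂ G₁.α G₂.α).opNorm_le_bound zero_le_one
        fun p => by rw [one_mul]; exact norm_fst_le p
    have hsnd : ‖ContinuousLinearMap.snd ℂ G₁.α G₂.α‖ ≤ 1 :=
      (ContinuousLinearMap.snd ℂ G₁.α G₂.α).opNorm_le_bound zero_le_one
        fun p => by rw [one_mul]; exact norm_snd_le p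
    exact hA.add_mem _ F _ _
      (nrm_comp_le_left hA (Gp := ⟨G₁.α × G₂.α⟩) (ContinuousLinearMap.fst ℂ G₁.α G₂.α) T₁ hT₁ hfst).1
      (nrm_comp_le_left hA (Gp := ⟨G₁.α × G₂.α⟩) (ContinuousLinearMap.snd ℂ G₁.α G₂.α) T₂ hT₂ hsnd).1
  · refine ⟨hg₁.1.prodMk hg₂.1, ?_⟩
    obtain ⟨M₁, hM₁⟩ := hg₁.2
    obtain ⟨M₂, hM₂⟩ := hg₂.2
    refine ⟨M₁ + M₂, ?_⟩
    rintro r ⟨x, hx, rfl⟩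
    have h1 : v x * ‖g₁ x‖ ≤ M₁ := hM₁ ⟨x, hx, rfl⟩
    have h2 : v x * ‖g₂ x‖ ≤ M₂ := hM₂ ⟨x, hx, rfl⟩
    have h3 : 0 ≤ v x * ‖g₁ x‖ := mul_nonneg (hw.2 x hx).le (norm_nonneg _)
    have h4 : 0 ≤ v x * ‖g₂ x‖ := mul_nonneg (hw.2 x hx).le (norm_nonneg _)
    calc v x * ‖(g₁ x, g₂ x)‖ = v x * max ‖g₁ x‖ ‖g₂ x‖ := by rw [Prod.norm_def]
      _ = max (v x * ‖g₁ x‖) (v x * ‖g₂ x‖) := mul_max_of_nonneg _ _ (hw.2 x hx).le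
      _ ≤ M₁ + M₂ := max_le (by linarith) (by linarith)
  · intro x hx
    simp [hfg₁ x hx, hfg₂ x hx]

lemma compWH_nrm_eq_zero (hA : IsNormedOpIdeal A) (hU : IsOpen U) (hw : IsWeight U v)
    {f : E.α → F.α} (hf : (compWH A).mem E U v F f)
    (h0 : (compWH A).nrm E U v F f = 0) : ∀ x ∈ U, f x = 0 := by
  intro x hx
  have h1 : hvNorm U v f ≤ 0 := h0 ▸ compWH_hv_le_nrm hA hU hw hf
  have hb := (compWH_mem_hv hA hU hw hf).2
  have h2 : v x * ‖f x‖ ≤ 0 := (le_hvNorm hb hx).trans h1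
  by_contra h
  exact absurd h2 (not_le.mpr (mul_pos (hw.2 x hx) (norm_pos_iff.mpr h)))

lemma compWH_nrm_add_le (hA : IsNormedOpIdeal A) (hU : IsOpen U) (hw : IsWeight U v)
    {f g : E.α → F.α} (hf : (compWH A).mem E U v F f) (hg : (compWH A).mem E U v F g) :
    (compWH A).nrm E U v F (fun x => f x + g x) ≤
      (compWH A).nrm E U v F f + (compWH A).nrm E U v F g := by
  refine le_of_forall_pos_le_add fun ε hε => ?_
  have hf2 : (compWH A).nrm E U v F f < (compWH A).nrm E U v F f + ε / 2 := by linarith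
  have hg2 : (compWH A).nrm E U v F g < (compWH A).nrm E U v F g + ε / 2 := by linarith
  obtain ⟨G₁, T₁, g₁, hT₁, hg₁, hfg₁, hnT₁, hng₁⟩ := normalizeFact hA hU hw hf hf2
  obtain ⟨G₂, T₂, g₂, hT₂, hg₂, hfg₂, hnT₂, hng₂⟩ := normalizeFact hA hU hw hg hg2
  set Gp : BanachSp.{u} := ⟨G₁.α × G₂.α⟩ with hGp
  set T'' : Gp.α →L[ℂ] F.α := T₁.comp (ContinuousLinearMap.fst ℂ G₁.α G₂.α) +
      T₂.comp (ContinuousLinearMap.snd ℂ G₁.α G₂.α) with hT''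
  set g'' : E.α → Gp.α := fun x => (g₁ x, g₂ x) with hg''
  have hfst : ‖ContinuousLinearMap.fst ℂ G₁.α G₂.α‖ ≤ 1 :=
    (ContinuousLinearMap.fst ℂ G₁.α G₂.α).opNorm_le_bound zero_le_one
      fun p => by rw [one_mul]; exact norm_fst_le p
  have hsnd : ‖ContinuousLinearMap.snd ℂ G₁.α G₂.α‖ ≤ 1 :=
    (ContinuousLinearMap.snd ℂ G₁.α G₂.α).opNorm_le_bound zero_le_one
      fun p => by rw [one_mul]; exact norm_snd_le p
  have hc₁ := nrm_comp_le_left hA (Gp := Gp) (ContinuousLinearMap.fst ℂ G₁.α G₂.α) T₁ hT₁ hfst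
  have hc₂ := nrm_comp_le_left hA (Gp := Gp) (ContinuousLinearMap.snd ℂ G₁.α G₂.α) T₂ hT₂ hsnd
  have hT''mem : A.mem Gp F T'' := hA.add_mem _ F _ _ hc₁.1 hc₂.1
  have hg''le : ∀ x ∈ U, v x * ‖g'' x‖ ≤ 1 := by
    intro x hx
    calc v x * ‖g'' x‖ = max (v x * ‖g₁ x‖) (v x * ‖g₂ x‖) := by
          rw [hg'', Prod.norm_def, mul_max_of_nonneg _ _ (hw.2 x hx).le]
      _ ≤ 1 := max_le ((le_hvNorm hg₁.2 hx).trans hng₁) ((le_hvNorm hg₂.2 hx).trans hng₂)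
  have hg''bdd : HvBdd U v g'' := ⟨hg₁.1.prodMk hg₂.1, ⟨1, by rintro r ⟨x, hx, rfl⟩; exact hg''le x hx⟩⟩
  have hfact : ∀ x ∈ U, f x + g x = T'' (g'' x) := fun x hx => by
    simp [hT'', hg'', hfg₁ x hx, hfg₂ x hx]
    rfl
  have hmem : A.nrm Gp F T'' * hvNorm U v g'' ∈
      factSet A E U v F (fun x => f x + g x) :=
    ⟨Gp, T'', g'', hT''mem, hg''bdd, hfact, rfl⟩
  have hTn : A.nrm Gp F T'' ≤ (compWH A).nrm E U v F f + (compWH A).nrm E U v F g + ε := by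
    calc A.nrm Gp F T'' ≤ A.nrm Gp F _ + A.nrm Gp F _ := hA.nrm_add_le _ F _ _ hc₁.1 hc₂.1
      _ ≤ A.nrm G₁ F T₁ + A.nrm G₂ F T₂ := add_le_add hc₁.2 hc₂.2
      _ ≤ _ := by linarith
  calc (compWH A).nrm E U v F (fun x => f x + g x) ≤ A.nrm Gp F T'' * hvNorm U v g'' :=
        compNrm_le hA hw hmem
    _ ≤ A.nrm Gp F T'' * 1 :=
        mul_le_mul_of_nonneg_left (hvNorm_le zero_le_one hg''le)
          (hA.nrm_nonneg Gp F T'' hT''mem)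
    _ = A.nrm Gp F T'' := mul_one _
    _ ≤ _ := hTn

lemma compWH_nrm_smul_le (hA : IsNormedOpIdeal A) (hU : IsOpen U) (hw : IsWeight U v)
    (c : ℂ) {f : E.α → F.α} (hf : (compWH A).mem E U v F f) :
    (compWH A).nrm E U v F (fun x => c • f x) ≤ ‖c‖ * (compWH A).nrm E U v F f := by
  rw [compWH_nrm_eq A E U v F f]
  refine le_mul_csInf (factSet_nonempty hf) (norm_nonneg c) ?_
  rintro r ⟨G, T, g, hT, hg, hfg, rfl⟩
  have hmem : A.nrm G F (c • T) * hvNorm U v g ∈ factSet A E U v F (fun x => c • f x) :=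
    ⟨G, c • T, g, hA.smul_mem G F c T hT, hg, fun x hx => by
      simp [ContinuousLinearMap.smul_apply, hfg x hx], rfl⟩
  calc (compWH A).nrm E U v F (fun x => c • f x) ≤ A.nrm G F (c • T) * hvNorm U v g :=
        compNrm_le hA hw hmem
    _ = ‖c‖ * (A.nrm G F T * hvNorm U v g) := by rw [hA.nrm_smul G F c T hT]; ring

lemma compWH_nrm_smul (hA : IsNormedOpIdeal A) (hU : IsOpen U) (hw : IsWeight U v)
    (c : ℂ) {f : E.α → F.α} (hf : (compWH A).mem E U v F f) :
    (compWH A).nrm E U v F (fun x => c • f x) = ‖c‖ * (compWH A).nrm E U v F f := by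
  rcases eq_or_ne c 0 with rfl | hc
  · simp only [zero_smul, norm_zero, zero_mul]
    have hmem : (0:ℝ) ∈ factSet A E U v F (fun _ => (0:F.α)) :=
      ⟨F, 0, fun _ => 0, hA.zero_mem F F, hvBdd_zero, fun x _ => by simp,
        by rw [opNrm_zero hA]; ring⟩
    exact le_antisymm (compNrm_le hA hw hmem) (compNrm_nonneg hA hw)
  · refine le_antisymm (compWH_nrm_smul_le hA hU hw c hf) ?_
    have hmem2 := compWH_smul_factor hA c hf
    have h2 := compWH_nrm_smul_le hA hU hw c⁻¹ hmem2
    have h3 : (fun x => c⁻¹ • (fun y => c • f y) x) = f := by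
      funext x
      simp [smul_smul, inv_mul_cancel₀ hc]
    rw [h3] at h2
    have hc' : (0:ℝ) < ‖c‖ := norm_pos_iff.mpr hc
    calc ‖c‖ * (compWH A).nrm E U v F f
        ≤ ‖c‖ * (‖c⁻¹‖ * (compWH A).nrm E U v F (fun x => c • f x)) :=
          mul_le_mul_of_nonneg_left h2 (norm_nonneg c)
      _ = (compWH A).nrm E U v F (fun x => c • f x) := by
          rw [norm_inv, ← mul_assoc, mul_inv_cancel₀ (ne_of_gt hc'), one_mul]

end CompAux2

section CompAux3

variable {A : OpAssignment.{u}} {E F : BanachSp.{u}} {U : Set E.α} {v : E.α → ℝ}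

lemma compWH_unit_mem (hA : IsNormedOpIdeal A) (hU : IsOpen U) (hw : IsWeight U v)
    (h : E.α → ℂ) (hh : HvBdd U v h) (y : F.α) :
    (compWH A).mem E U v F (fun x => h x • y) ∧
      (compWH A).nrm E U v F (fun x => h x • y) = hvNorm U v h * ‖y‖ := by
  set Gc : BanachSp.{u} := ⟨ULift.{u} ℂ⟩ with hGc
  set e : ULift.{u} ℂ ≃ₗᵢ[ℂ] ℂ := LinearIsometryEquiv.ulift ℂ ℂ with he
  set φ : Gc.α →L[ℂ] ℂ := e.toLinearIsometry.toContinuousLinearMap with hφ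
  set g : E.α → Gc.α := fun x => e.symm (h x) with hg
  have hgnorm : ∀ x ∈ U, ‖g x‖ = ‖h x‖ := fun x _ => e.symm.norm_map (h x)
  have hgb : HvBdd U v g := by
    refine ⟨?_, hvBddAbove_congr_norm hgnorm hh.2⟩
    exact (e.symm.toContinuousLinearEquiv.differentiable.comp_differentiableOn hh.1).congr
      fun x _ => by simp [hg]
  have hfact : ∀ x ∈ U, h x • y = (φ.smulRight y) (g x) := by
    intro x hx
    rw [ContinuousLinearMap.smulRight_apply]
    simp [hφ, hg]
  have hr := hA.rank_one_mem Gc F φ y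
  have hφ1 : ‖φ‖ ≤ 1 := by
    refine φ.opNorm_le_bound zero_le_one fun z => ?_
    rw [one_mul]
    exact le_of_eq (by simp [hφ])
  have hmemel : A.nrm Gc F (φ.smulRight y) * hvNorm U v g ∈
      factSet A E U v F (fun x => h x • y) :=
    ⟨Gc, φ.smulRight y, g, hr.1, hgb, hfact, rfl⟩
  have hmem : (compWH A).mem E U v F (fun x => h x • y) :=
    ⟨Gc, φ.smulRight y, g, hr.1, hgb, hfact⟩
  refine ⟨hmem, le_antisymm ?_ ?_⟩
  · calc (compWH A).nrm E U v F (fun x => h x • y)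
        ≤ A.nrm Gc F (φ.smulRight y) * hvNorm U v g := compNrm_le hA hw hmemel
      _ = (‖φ‖ * ‖y‖) * hvNorm U v h := by rw [hr.2, hvNorm_eq_of_norm_eq hgnorm]
      _ ≤ (1 * ‖y‖) * hvNorm U v h := by
          refine mul_le_mul_of_nonneg_right ?_ (hvNorm_nonneg hw h)
          exact mul_le_mul_of_nonneg_right hφ1 (norm_nonneg y)
      _ = hvNorm U v h * ‖y‖ := by ring
  · rw [← hvNorm_smul_const hw hh y]
    exact compWH_hv_le_nrm hA hU hw hmem

lemma compWH_comp (hA : IsNormedOpIdeal A) (E : BanachSp.{u}) (U : Set E.α) (v : E.α → ℝ)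
    (hU : IsOpen U) (hw : IsWeight U v) (V : Set E.α) (hV : IsOpen V) (hVU : V ⊆ U)
    (h : E.α → E.α) (hd : DifferentiableOn ℂ h V) (hm : Set.MapsTo h V U)
    (c : ℝ) (hc : 0 ≤ c) (hvc : ∀ x ∈ V, v x ≤ c * v (h x))
    (F G : BanachSp.{u}) (T : F.α →L[ℂ] G.α) (f : E.α → F.α)
    (hf : (compWH A).mem E U v F f) :
    (compWH A).mem E V v G (fun x => T (f (h x))) ∧
      (compWH A).nrm E V v G (fun x => T (f (h x))) ≤
        ‖T‖ * (compWH A).nrm E U v F f * c := by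
  have hwV : IsWeight V v := ⟨hw.1.mono hVU, fun x hx => hw.2 x (hVU hx)⟩
  have key : ∀ (G₁ : BanachSp.{u}) (T₁ : G₁.α →L[ℂ] F.α) (g₁ : E.α → G₁.α),
      A.mem G₁ F T₁ → HvBdd U v g₁ → (∀ x ∈ U, f x = T₁ (g₁ x)) →
      (compWH A).mem E V v G (fun x => T (f (h x))) ∧
      (compWH A).nrm E V v G (fun x => T (f (h x))) ≤
        ‖T‖ * c * (A.nrm G₁ F T₁ * hvNorm U v g₁) := by
    intro G₁ T₁ g₁ hT₁ hg₁ hfg₁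
    have hcomp := nrm_comp_le_right hA T₁ T hT₁
    have hgV : ∀ x ∈ V, v x * ‖g₁ (h x)‖ ≤ c * hvNorm U v g₁ := by
      intro x hx
      calc v x * ‖g₁ (h x)‖ ≤ (c * v (h x)) * ‖g₁ (h x)‖ :=
            mul_le_mul_of_nonneg_right (hvc x hx) (norm_nonneg _)
        _ = c * (v (h x) * ‖g₁ (h x)‖) := by ring
        _ ≤ c * hvNorm U v g₁ :=
            mul_le_mul_of_nonneg_left (le_hvNorm hg₁.2 (hm hx)) hc
    have hgb : HvBdd V v (fun x => g₁ (h x)) :=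
      ⟨hg₁.1.comp hd hm, ⟨c * hvNorm U v g₁, by rintro r ⟨x, hx, rfl⟩; exact hgV x hx⟩⟩
    have hfact : ∀ x ∈ V, T (f (h x)) = (T.comp T₁) (g₁ (h x)) := fun x hx => by
      rw [hfg₁ (h x) (hm hx)]; rfl
    have hmem' : A.nrm G₁ G (T.comp T₁) * hvNorm V v (fun x => g₁ (h x)) ∈
        factSet A E V v G (fun x => T (f (h x))) :=
      ⟨G₁, T.comp T₁, fun x => g₁ (h x), hcomp.1, hgb, hfact, rfl⟩
    refine ⟨⟨G₁, T.comp T₁, fun x => g₁ (h x), hcomp.1, hgb, hfact⟩, ?_⟩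
    calc (compWH A).nrm E V v G (fun x => T (f (h x)))
        ≤ A.nrm G₁ G (T.comp T₁) * hvNorm V v (fun x => g₁ (h x)) :=
          compNrm_le hA hwV hmem'
      _ ≤ (‖T‖ * A.nrm G₁ F T₁) * (c * hvNorm U v g₁) :=
          mul_le_mul hcomp.2
            (hvNorm_le (mul_nonneg hc (hvNorm_nonneg hw g₁)) hgV)
            (hvNorm_nonneg hwV _)
            (mul_nonneg (norm_nonneg T) (hA.nrm_nonneg _ _ _ hT₁))
      _ = ‖T‖ * c * (A.nrm G₁ F T₁ * hvNorm U v g₁) := by ring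
  constructor
  · obtain ⟨G₁, T₁, g₁, hT₁, hg₁, hfg₁⟩ := hf
    exact (key G₁ T₁ g₁ hT₁ hg₁ hfg₁).1
  · rw [compWH_nrm_eq A E U v F f, mul_right_comm]
    refine le_mul_csInf (factSet_nonempty hf) (mul_nonneg (norm_nonneg T) hc) ?_
    rintro r ⟨G₁, T₁, g₁, hT₁, hg₁, hfg₁, rfl⟩
    exact (key G₁ T₁ g₁ hT₁ hg₁ hfg₁).2

end CompAux3

section CompAux4

lemma differentiableOn_into_closed_submodule {E G : Type u} [NormedAddCommGroup E]
    [NormedSpace ℂ E] [NormedAddCommGroup G] [NormedSpace ℂ G] {p : Submodule ℂ G}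
    (hp : IsClosed (p : Set G)) {f : E → ↥p} {U : Set E} (hU : IsOpen U)
    (hd : DifferentiableOn ℂ (fun x => (f x : G)) U) : DifferentiableOn ℂ f U := by
  intro x hx
  set Fc : E → G := fun x => (f x : G) with hFc
  have hFd : DifferentiableAt ℂ Fc x := (hd x hx).differentiableAt (hU.mem_nhds hx)
  set D := fderiv ℂ Fc x with hD
  have hDf : HasFDerivAt Fc D x := hFd.hasFDerivAt
  have hmem : ∀ e : E, D e ∈ p := by
    intro e
    have hline : HasDerivAt (fun t : ℂ => x + t • e) ((1:ℂ) • e) 0 :=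
      ((hasDerivAt_id (0:ℂ)).smul_const e).const_add x
    have hcomp : HasDerivAt (fun t : ℂ => Fc (x + t • e)) (D ((1:ℂ) • e)) 0 := by
      have := hDf
      rw [show x = x + (0:ℂ) • e by simp] at this
      exact this.comp_hasDerivAt 0 hline
    rw [one_smul] at hcomp
    have hslope := hasDerivAt_iff_tendsto_slope.mp hcomp
    refine hp.mem_of_tendsto hslope (Filter.Eventually.of_forall fun t => ?_)
    show slope (fun t : ℂ => Fc (x + t • e)) 0 t ∈ p
    simp only [slope, vsub_eq_sub]
    exact p.smul_mem _ (p.sub_mem (f _).2 (f _).2)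
  set D' : E →L[ℂ] ↥p := D.codRestrict p hmem with hD'
  have hkey : HasFDerivAt f D' x := by
    rw [hasFDerivAt_iff_isLittleO_nhds_zero] at hDf ⊢
    rw [Asymptotics.isLittleO_iff] at hDf ⊢
    intro ε hε
    filter_upwards [hDf hε] with z hz
    have : ‖f (x + z) - f x - D' z‖ = ‖Fc (x + z) - Fc x - D z‖ := by
      rw [← Submodule.norm_coe (f (x + z) - f x - D' z)]
      congr 1
    rw [this]
    exact hz
  exact hkey.differentiableAt.differentiableWithinAt

end CompAux4

section CompAux5

variable {A : OpAssignment.{u}}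

lemma compWH_injective (hA : IsNormedOpIdeal A) (hinj : OpInjective A) :
    WHInjective (compWH A) := by
  intro Eb U v hU hw Fb Gb f hf ι hmem
  have key : ∀ (G₁ : BanachSp.{u}) (T : G₁.α →L[ℂ] Gb.α) (g : Eb.α → G₁.α),
      A.mem G₁ Gb T → HvBdd U v g → (∀ x ∈ U, ι (f x) = T (g x)) →
      ∃ (G₀ : BanachSp.{u}) (S : G₀.α →L[ℂ] Fb.α) (g' : Eb.α → G₀.α),
        A.mem G₀ Fb S ∧ HvBdd U v g' ∧ (∀ x ∈ U, f x = S (g' x)) ∧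
          A.nrm G₀ Fb S * hvNorm U v g' ≤ A.nrm G₁ Gb T * hvNorm U v g := by
    intro G₁ T g hT hg hfg
    classical
    set p := (Submodule.span ℂ (g '' U)).topologicalClosure with hpdef
    have hpc : IsClosed (p : Set G₁.α) := Submodule.isClosed_topologicalClosure _
    have hgU : ∀ x ∈ U, g x ∈ p := fun x hx =>
      Submodule.le_topologicalClosure _ (Submodule.subset_span ⟨x, hx, rfl⟩)
    have hRc : IsClosed ((LinearMap.range ι.toLinearMap : Submodule ℂ Gb.α) : Set Gb.α) := by
      have h1 : IsClosed (Set.range ι) := ι.isometry.isClosedEmbedding.isClosed_range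
      have h2 : ((LinearMap.range ι.toLinearMap : Submodule ℂ Gb.α) : Set Gb.α) =
          Set.range ι := by
        ext z
        simp [LinearMap.mem_range]
      rw [h2]
      exact h1
    have hTp : ∀ z : ↥p, T ↑z ∈ LinearMap.range ι.toLinearMap := by
      have hle : p ≤ Submodule.comap (T : G₁.α →ₗ[ℂ] Gb.α)
          (LinearMap.range ι.toLinearMap) := by
        apply Submodule.topologicalClosure_minimal
        · rw [Submodule.span_le]
          rintro _ ⟨x, hx, rfl⟩
          exact ⟨f x, by simpa using hfg x hx⟩
        · exact hRc.preimage T.continuous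
      exact fun z => hle z.2
    haveI := hpc.completeSpace_coe
    set G₀ : BanachSp.{u} := ⟨↥p⟩ with hG₀
    set e := LinearEquiv.ofInjective ι.toLinearMap ι.injective with he
    set Tres : ↥p →ₗ[ℂ] ↥(LinearMap.range ι.toLinearMap) :=
      LinearMap.codRestrict (LinearMap.range ι.toLinearMap)
        ((T : G₁.α →ₗ[ℂ] Gb.α).comp p.subtype) (fun z => hTp z) with hTres
    set Slin : ↥p →ₗ[ℂ] Fb.α := (e.symm : ↥(LinearMap.range ι.toLinearMap) →ₗ[ℂ] Fb.α).comp Tres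
      with hSlindef
    have hιS : ∀ z : ↥p, ι (Slin z) = T ↑z := by
      intro z
      have h2 : e (e.symm (Tres z)) = Tres z := e.apply_symm_apply _
      have h1 : (↑(e (e.symm (Tres z))) : Gb.α) = ι.toLinearMap (e.symm (Tres z)) :=
        LinearEquiv.ofInjective_apply ι.toLinearMap _
      have h3 : (↑(Tres z) : Gb.α) = T ↑z := rfl
      have h4 : Slin z = e.symm (Tres z) := rfl
      rw [h4]
      show ι.toLinearMap (e.symm (Tres z)) = T ↑z
      rw [← h1, h2, h3]
    have hSbound : ∀ z : ↥p, ‖Slin z‖ ≤ ‖T‖ * ‖z‖ := fun z => by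
      rw [← ι.norm_map (Slin z), hιS z]
      calc ‖T ↑z‖ ≤ ‖T‖ * ‖(z : G₁.α)‖ := T.le_opNorm _
        _ = ‖T‖ * ‖z‖ := by rw [Submodule.norm_coe]
    set S : G₀.α →L[ℂ] Fb.α := Slin.mkContinuous ‖T‖ hSbound with hSdef
    have hSapp : ∀ z, S z = Slin z := fun z => rfl
    have hcomp : ι.toContinuousLinearMap.comp S = T.comp p.subtypeL := by
      ext z
      show ι (S z) = T ↑z
      rw [hSapp, hιS z]
    have hTj := nrm_comp_le_left hA (Gp := G₀) p.subtypeL T hT (Submodule.norm_subtypeL_le p)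
    have hinj' := hinj G₀ Fb Gb ι S (by rw [hcomp]; exact hTj.1)
    have hSnrm : A.nrm G₀ Fb S ≤ A.nrm G₁ Gb T := by
      rw [hinj'.2, hcomp]
      exact hTj.2
    set g' : Eb.α → G₀.α := fun x => if hx : x ∈ U then (⟨g x, hgU x hx⟩ : ↥p) else 0
      with hg'def
    have hg'coe : ∀ x ∈ U, ((g' x : ↥p) : G₁.α) = g x := fun x hx => by
      simp [hg'def, hx]
    have hg'n : ∀ x ∈ U, ‖g' x‖ = ‖g x‖ := fun x hx => by
      rw [← Submodule.norm_coe, hg'coe x hx]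
    have hg'b : HvBdd U v g' :=
      ⟨differentiableOn_into_closed_submodule hpc hU (hg.1.congr hg'coe),
        hvBddAbove_congr_norm hg'n hg.2⟩
    have hfact : ∀ x ∈ U, f x = S (g' x) := by
      intro x hx
      apply ι.injective
      rw [hSapp, hιS, hg'coe x hx, hfg x hx]
    refine ⟨G₀, S, g', hinj'.1, hg'b, hfact, ?_⟩
    rw [hvNorm_eq_of_norm_eq hg'n]
    exact mul_le_mul_of_nonneg_right hSnrm (hvNorm_nonneg hw g)
  obtain ⟨G₁, T, g, hT, hg, hfg⟩ := hmem
  have hfg' : ∀ x ∈ U, ι (f x) = T (g x) := hfg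
  obtain ⟨G₀, S, g', hS, hg'b, hfact, hval⟩ := key G₁ T g hT hg hfg'
  have hfmem : (compWH A).mem Eb U v Fb f := ⟨G₀, S, g', hS, hg'b, hfact⟩
  refine ⟨hfmem, le_antisymm ?_ ?_⟩
  · rw [compWH_nrm_eq A Eb U v Gb]
    refine le_csInf (factSet_nonempty ⟨G₁, T, g, hT, hg, hfg⟩) ?_
    rintro r ⟨G₂, T₂, g₂, hT₂, hg₂, hfg₂, rfl⟩
    obtain ⟨G₀', S', g'', hS', hg''b, hfact', hval'⟩ := key G₂ T₂ g₂ hT₂ hg₂ hfg₂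
    exact (compNrm_le hA hw ⟨G₀', S', g'', hS', hg''b, hfact', rfl⟩).trans hval'
  · rw [compWH_nrm_eq A Eb U v Fb f]
    refine le_csInf (factSet_nonempty hfmem) ?_
    rintro r ⟨G₂, T₂, g₂, hT₂, hg₂, hfg₂, rfl⟩
    have hcomp2 := nrm_comp_le_right hA T₂ ι.toContinuousLinearMap hT₂
    have hι1 : ‖ι.toContinuousLinearMap‖ ≤ 1 := by
      refine ContinuousLinearMap.opNorm_le_bound _ zero_le_one fun z => ?_
      rw [one_mul]
      exact le_of_eq (by simp)
    have hel : A.nrm G₂ Gb (ι.toContinuousLinearMap.comp T₂) * hvNorm U v g₂ ∈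
        factSet A Eb U v Gb (fun x => ι (f x)) :=
      ⟨G₂, ι.toContinuousLinearMap.comp T₂, g₂, hcomp2.1, hg₂,
        fun x hx => by show ι (f x) = _; rw [hfg₂ x hx]; rfl, rfl⟩
    calc (compWH A).nrm Eb U v Gb (fun x => ι (f x))
        ≤ A.nrm G₂ Gb (ι.toContinuousLinearMap.comp T₂) * hvNorm U v g₂ :=
          compNrm_le hA hw hel
      _ ≤ (1 * A.nrm G₂ Fb T₂) * hvNorm U v g₂ := by
          refine mul_le_mul_of_nonneg_right ?_ (hvNorm_nonneg hw g₂)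
          exact hcomp2.2.trans
            (mul_le_mul_of_nonneg_right hι1 (hA.nrm_nonneg _ _ _ hT₂))
      _ = A.nrm G₂ Fb T₂ * hvNorm U v g₂ := by ring
end CompAux5

/-- if `A` is an injective normed operator ideal then `A ∘ H_v^∞` is an
injective normed weighted holomorphic ideal. -/
theorem composition_with_injective_ideal (A : OpAssignment.{u})
    (hA : IsNormedOpIdeal A) (hinj : OpInjective A) :
    IsNormedWHIdeal (compWH A) ∧ WHInjective (compWH A) := by
  refine ⟨?_, compWH_injective hA hinj⟩
  exact
    { mem_hv := fun E U v hU hw F f hf => compWH_mem_hv hA hU hw hf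
      zero_mem := fun E U v hU hw F => compWH_zero_mem hA
      add_mem := fun E U v hU hw F f g hf hg => compWH_add_mem hA hU hw hf hg
      smul_mem := fun E U v hU hw F c f hf => compWH_smul_factor hA c hf
      nrm_nonneg := fun E U v hU hw F f hf => compNrm_nonneg hA hw
      nrm_eq_zero := fun E U v hU hw F f hf h0 => compWH_nrm_eq_zero hA hU hw hf h0
      nrm_add_le := fun E U v hU hw F f g hf hg => compWH_nrm_add_le hA hU hw hf hg
      nrm_smul := fun E U v hU hw F c f hf => compWH_nrm_smul hA hU hw c hf
      hv_le_nrm := fun E U v hU hw F f hf => compWH_hv_le_nrm hA hU hw hf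
      unit_mem := fun E U v hU hw F h hh y => compWH_unit_mem hA hU hw h hh y
      comp_mem := fun E U v hU hw V hV hVU h hd hm c hc hvc F G T f hf =>
        compWH_comp hA E U v hU hw V hV hVU h hd hm c hc hvc F G T f hf }

end
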